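/- If (x_n)_{n∈ℤ} satisfies x_n = n + o(n) as n → ±∞, then for each fixed n the gaps of the iterated midpoint sequences satisfy x^j_{n+1} - x^j_n → 1 as j → ∞. -/

import Mathlib

open Filter

/-- The iterated midpoint sequences: `x^0_n = x_n` and
`x^{j+1}_n = ½(x^j_n + x^j_{n+(-1)^j})`. -/
noncomputable def midIter (x : ℤ → ℝ) : ℕ → ℤ → ℝ
  | 0, n => x n
  | (j + 1), n => (midIter x j n + midIter x j (n + (-1) ^ j)) / 2

open Finset

/-- Difference coefficients `C(j,k) - C(j,k-1)` (with `C(j,-1) = 0`). -/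
def wcoef (j k : ℕ) : ℤ := if k = 0 then 1 else (j.choose k : ℤ) - j.choose (k - 1)

lemma wcoef_zero (j : ℕ) : wcoef j 0 = 1 := rfl

lemma wcoef_succ (j k : ℕ) : wcoef j (k + 1) = (j.choose (k + 1) : ℤ) - j.choose k := by
  simp [wcoef]

lemma wcoef_pascal (j k : ℕ) : wcoef (j + 1) (k + 1) = wcoef j (k + 1) + wcoef j k := by
  cases k with
  | zero => simp [wcoef_succ, wcoef_zero, Nat.choose_succ_succ]
  | succ k =>
      simp only [wcoef_succ, Nat.choose_succ_succ (j) (k+1), Nat.choose_succ_succ (j) k,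
        Nat.choose_succ_succ]
      push_cast
      ring

lemma wcoef_eq_zero {j k : ℕ} (h : j + 1 < k) : wcoef j k = 0 := by
  obtain ⟨r, rfl⟩ : ∃ r, k = r + 1 := ⟨k - 1, by omega⟩
  rw [wcoef_succ, Nat.choose_eq_zero_of_lt (by omega), Nat.choose_eq_zero_of_lt (by omega)]
  simp

lemma sum_wcoef (j K : ℕ) : ∑ k ∈ range (K + 1), wcoef j k = (j.choose K : ℤ) := by
  induction K with
  | zero => simp [wcoef_zero]
  | succ K IH => rw [Finset.sum_range_succ, IH, wcoef_succ]; ring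

lemma sum_wcoef_mul (j K : ℕ) :
    ∑ k ∈ range (K + 1), wcoef j k * ((K : ℤ) - k) = ∑ r ∈ range K, (j.choose r : ℤ) := by
  induction K with
  | zero => simp
  | succ K IH =>
      have h : ∀ k ∈ range (K + 2), wcoef j k * (((K:ℤ) + 1) - k)
          = wcoef j k * ((K : ℤ) - k) + wcoef j k := by intro k _; ring
      push_cast
      rw [show K+1+1 = K+2 from rfl, Finset.sum_congr rfl h, Finset.sum_add_distrib, sum_wcoef,
        Finset.sum_range_succ _ (K + 1), IH, Finset.sum_range_succ _ K, wcoef_succ]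
      push_cast
      ring

lemma choose_mono_mid {j r : ℕ} (h : r + 1 ≤ (j + 1) / 2) : j.choose r ≤ j.choose (r + 1) := by
  rcases lt_or_ge r (j / 2) with h' | h'
  · exact Nat.choose_le_succ_of_lt_half_left h'
  · have hj : j = 2 * r + 1 := by omega
    subst hj
    exact le_of_eq (Nat.choose_symm_half r).symm

lemma wcoef_nonneg {j k : ℕ} (h : k ≤ (j + 1) / 2) : 0 ≤ wcoef j k := by
  cases k with
  | zero => simp [wcoef_zero]
  | succ r =>
      rw [wcoef_succ, sub_nonneg]
      exact_mod_cast choose_mono_mid h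

lemma wcoef_nonpos {j k : ℕ} (h : (j + 1) / 2 < k) : wcoef j k ≤ 0 := by
  obtain ⟨r, rfl⟩ : ∃ r, k = r + 1 := ⟨k - 1, by omega⟩
  rw [wcoef_succ, sub_nonpos]
  rcases le_or_gt (r + 1) j with hrj | hrj
  · have e1 : j.choose (r + 1) = j.choose (j - (r + 1)) := (Nat.choose_symm hrj).symm
    have e2 : j.choose r = j.choose (j - r) := (Nat.choose_symm (by omega)).symm
    have e3 : j - r = (j - (r + 1)) + 1 := by omega
    rw [e1, e2, e3]
    exact_mod_cast choose_mono_mid (by omega)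
  · rw [Nat.choose_eq_zero_of_lt hrj]
    exact_mod_cast Nat.zero_le _

lemma sum_abs_wcoef (j : ℕ) :
    ∑ k ∈ range (j + 2), |wcoef j k| = 2 * (j.choose ((j + 1) / 2) : ℤ) := by
  set s := (j + 1) / 2 with hs
  have hsle : s + 1 ≤ j + 2 := by omega
  rw [← Finset.sum_range_add_sum_Ico _ hsle]
  have h1 : ∑ k ∈ range (s + 1), |wcoef j k| = ∑ k ∈ range (s + 1), wcoef j k := by
    refine Finset.sum_congr rfl fun k hk => abs_of_nonneg (wcoef_nonneg ?_)
    simp only [Finset.mem_range] at hk; omega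
  have h2 : ∑ k ∈ Finset.Ico (s + 1) (j + 2), |wcoef j k|
      = -∑ k ∈ Finset.Ico (s + 1) (j + 2), wcoef j k := by
    rw [← Finset.sum_neg_distrib]
    refine Finset.sum_congr rfl fun k hk => abs_of_nonpos (wcoef_nonpos ?_)
    simp only [Finset.mem_Ico] at hk; omega
  have h3 : ∑ k ∈ range (s + 1), wcoef j k + ∑ k ∈ Finset.Ico (s + 1) (j + 2), wcoef j k
      = ∑ k ∈ range (j + 2), wcoef j k := Finset.sum_range_add_sum_Ico _ hsle
  have h4 : ∑ k ∈ range (j + 2), wcoef j k = 0 := by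
    have := sum_wcoef j (j + 1)
    rwa [Nat.choose_succ_self, Nat.cast_zero] at this
  rw [h1, h2, sum_wcoef]
  have : ∑ k ∈ Finset.Ico (s + 1) (j + 2), wcoef j k = -(j.choose s : ℤ) := by
    have := sum_wcoef j s
    omega
  rw [this]; ring

lemma sum_abs_wcoef_mul (j : ℕ) :
    ∑ k ∈ range (j + 2), |wcoef j k| * |(((j + 1) / 2 : ℕ) : ℤ) - k| = 2 ^ j := by
  set s := (j + 1) / 2 with hs
  have hsle : s + 1 ≤ j + 2 := by omega
  have hW0 : ∑ k ∈ range (j + 2), wcoef j k = 0 := by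
    have := sum_wcoef j (j + 1)
    rwa [Nat.choose_succ_self, Nat.cast_zero] at this
  have hT : ∑ k ∈ range (j + 2), wcoef j k * (((j + 1 : ℕ) : ℤ) - k) = 2 ^ j := by
    rw [sum_wcoef_mul j (j + 1)]
    have := Nat.sum_range_choose j
    have : ((∑ r ∈ range (j + 1), j.choose r : ℕ) : ℤ) = ((2 ^ j : ℕ) : ℤ) := by rw [this]
    push_cast at this
    exact this
  have hW1 : ∑ k ∈ range (j + 2), wcoef j k * ((k : ℤ) - s) = -2 ^ j := by
    have h : ∀ k ∈ range (j + 2), wcoef j k * ((k : ℤ) - s)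
        = -(wcoef j k * (((j + 1 : ℕ) : ℤ) - k)) + (((j + 1 : ℕ) : ℤ) - s) * wcoef j k := by
      intro k _; push_cast; ring
    rw [Finset.sum_congr rfl h, Finset.sum_add_distrib, Finset.sum_neg_distrib,
      ← Finset.mul_sum, hW0, hT]
    ring
  have hLeq : ∑ k ∈ range (s + 1), wcoef j k * ((s : ℤ) - k)
      = ∑ r ∈ range s, (j.choose r : ℤ) := sum_wcoef_mul j s
  have hsplit : ∑ k ∈ range (s + 1), wcoef j k * ((k : ℤ) - s)
      + ∑ k ∈ Finset.Ico (s + 1) (j + 2), wcoef j k * ((k : ℤ) - s)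
      = ∑ k ∈ range (j + 2), wcoef j k * ((k : ℤ) - s) :=
    Finset.sum_range_add_sum_Ico _ hsle
  have hneg : ∑ k ∈ range (s + 1), wcoef j k * ((k : ℤ) - s)
      = -∑ k ∈ range (s + 1), wcoef j k * ((s : ℤ) - k) := by
    rw [← Finset.sum_neg_distrib]
    exact Finset.sum_congr rfl fun k _ => by ring
  have hIco : ∑ k ∈ Finset.Ico (s + 1) (j + 2), wcoef j k * ((k : ℤ) - s)
      = (∑ r ∈ range s, (j.choose r : ℤ)) - 2 ^ j := by
    have := hsplit
    rw [hW1, hneg, hLeq] at this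
    omega
  rw [← Finset.sum_range_add_sum_Ico _ hsle]
  have h1 : ∑ k ∈ range (s + 1), |wcoef j k| * |(s : ℤ) - k|
      = ∑ k ∈ range (s + 1), wcoef j k * ((s : ℤ) - k) := by
    refine Finset.sum_congr rfl fun k hk => ?_
    simp only [Finset.mem_range] at hk
    rw [abs_of_nonneg (wcoef_nonneg (by omega)), abs_of_nonneg (by
      have : (k : ℤ) ≤ s := by exact_mod_cast Nat.lt_succ_iff.mp hk
      omega)]
  have h2 : ∑ k ∈ Finset.Ico (s + 1) (j + 2), |wcoef j k| * |(s : ℤ) - k|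
      = -∑ k ∈ Finset.Ico (s + 1) (j + 2), wcoef j k * ((k : ℤ) - s) := by
    rw [← Finset.sum_neg_distrib]
    refine Finset.sum_congr rfl fun k hk => ?_
    simp only [Finset.mem_Ico] at hk
    rw [abs_of_nonpos (wcoef_nonpos (by omega)), abs_of_nonpos (by
      have : (s : ℤ) < k := by exact_mod_cast hk.1
      omega)]
    ring
  rw [h1, h2, hLeq, hIco]
  ring

lemma centralBinom_sq_bound (m : ℕ) :
    ((m : ℝ) + 1) * (Nat.centralBinom m : ℝ) ^ 2 ≤ 16 ^ m := by
  induction m with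
  | zero => norm_num [Nat.centralBinom_zero]
  | succ m IH =>
      have key : ((m : ℝ) + 1) * (Nat.centralBinom (m + 1) : ℝ)
          = 2 * (2 * m + 1) * (Nat.centralBinom m : ℝ) := by
        have := Nat.succ_mul_centralBinom_succ m
        have : (((m + 1) * Nat.centralBinom (m + 1) : ℕ) : ℝ)
            = ((2 * (2 * m + 1) * Nat.centralBinom m : ℕ) : ℝ) := by rw [this]
        push_cast at this
        linarith
      have hm1 : (0 : ℝ) < (m : ℝ) + 1 := by positivity
      have hcb : (0 : ℝ) ≤ (Nat.centralBinom m : ℝ) := by positivity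
      have h16 : (0 : ℝ) ≤ (16 : ℝ) ^ m := by positivity
      have hsq : ((m : ℝ) + 1) ^ 2 * (Nat.centralBinom (m + 1) : ℝ) ^ 2
          = (2 * (2 * m + 1)) ^ 2 * (Nat.centralBinom m : ℝ) ^ 2 := by
        have := congrArg (fun t : ℝ => t ^ 2) key
        nlinarith [this]
      have goal' : ((m : ℝ) + 1 + 1) * (((m : ℝ) + 1) ^ 2 * (Nat.centralBinom (m + 1) : ℝ) ^ 2)
          ≤ 16 ^ (m + 1) * ((m : ℝ) + 1) ^ 2 := by
        rw [hsq]
        have h1 : (2 * (2 * (m:ℝ) + 1)) ^ 2 * ((m:ℝ) + 1 + 1) ≤ 16 * ((m:ℝ) + 1) ^ 3 := by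
          nlinarith [sq_nonneg ((m:ℝ))]
        calc ((m : ℝ) + 1 + 1) * ((2 * (2 * m + 1)) ^ 2 * (Nat.centralBinom m : ℝ) ^ 2)
            = (2 * (2 * (m:ℝ) + 1)) ^ 2 * ((m:ℝ) + 1 + 1) * (Nat.centralBinom m : ℝ) ^ 2 := by
              ring
          _ ≤ 16 * ((m:ℝ) + 1) ^ 3 * (Nat.centralBinom m : ℝ) ^ 2 := by
              exact mul_le_mul_of_nonneg_right h1 (by positivity)
          _ = 16 * ((m:ℝ) + 1) ^ 2 * (((m:ℝ) + 1) * (Nat.centralBinom m : ℝ) ^ 2) := by ring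
          _ ≤ 16 * ((m:ℝ) + 1) ^ 2 * 16 ^ m := by
              exact mul_le_mul_of_nonneg_left IH (by positivity)
          _ = 16 ^ (m + 1) * ((m : ℝ) + 1) ^ 2 := by ring
      have hpos : (0 : ℝ) < ((m : ℝ) + 1) ^ 2 := by positivity
      push_cast
      refine (mul_le_mul_iff_of_pos_right hpos).mp ?_
      calc ((m : ℝ) + 1 + 1) * (Nat.centralBinom (m + 1) : ℝ) ^ 2 * ((m : ℝ) + 1) ^ 2
            = ((m : ℝ) + 1 + 1) * (((m : ℝ) + 1) ^ 2 * (Nat.centralBinom (m + 1) : ℝ) ^ 2) := by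
              ring
          _ ≤ 16 ^ (m + 1) * ((m : ℝ) + 1) ^ 2 := goal'

lemma mid_choose_sq (j : ℕ) :
    (j.choose ((j + 1) / 2) : ℝ) ^ 2 * ((((j + 1) / 2 : ℕ) : ℝ) + 1) ≤ 4 ^ j := by
  rcases Nat.even_or_odd j with ⟨m, hm⟩ | ⟨m, hm⟩
  · have hj : j = 2 * m := by omega
    subst hj
    have hs : (2 * m + 1) / 2 = m := by omega
    rw [hs, ← Nat.centralBinom_eq_two_mul_choose]
    have h16 : (4 : ℝ) ^ (2 * m) = 16 ^ m := by
      rw [pow_mul]; norm_num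
    rw [h16]
    have := centralBinom_sq_bound m
    nlinarith [this]
  · have hj : j = 2 * m + 1 := by omega
    subst hj
    have hs : (2 * m + 1 + 1) / 2 = m + 1 := by omega
    rw [hs]
    have hdouble : Nat.centralBinom (m + 1) = 2 * ((2 * m + 1).choose (m + 1)) := by
      rw [Nat.centralBinom_eq_two_mul_choose]
      have h : 2 * (m + 1) = (2 * m + 1) + 1 := by ring
      rw [h]
      rw [show (2 * m + 1) + 1 = (2 * m + 1) + 1 from rfl]
      rw [show (m + 1) = m + 1 from rfl]
      rw [Nat.choose_succ_succ (2 * m + 1) m, Nat.choose_symm_half]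
      ring
    have hcbR : (Nat.centralBinom (m + 1) : ℝ) = 2 * ((2 * m + 1).choose (m + 1) : ℝ) := by
      exact_mod_cast congrArg (fun t : ℕ => (t : ℝ)) hdouble
    have hb := centralBinom_sq_bound (m + 1)
    rw [hcbR] at hb
    have h4 : (4 : ℝ) ^ (2 * m + 1) = 4 * 16 ^ m := by
      rw [pow_succ, pow_mul]; norm_num; ring
    rw [h4]
    have h16s : (16 : ℝ) ^ (m + 1) = 16 * 16 ^ m := by rw [pow_succ]; ring
    rw [h16s] at hb
    push_cast at hb ⊢
    nlinarith [hb]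

lemma mid_choose_tendsto :
    Tendsto (fun j : ℕ => (j.choose ((j + 1) / 2) : ℝ) / 2 ^ j) atTop (nhds 0) := by
  have h0 : ∀ j : ℕ, 0 ≤ (j.choose ((j + 1) / 2) : ℝ) / 2 ^ j := fun j => by positivity
  have hle : ∀ j : ℕ, (j.choose ((j + 1) / 2) : ℝ) / 2 ^ j ≤ Real.sqrt (2 / ((j : ℝ) + 1)) := by
    intro j
    rw [Real.le_sqrt (h0 j) (by positivity)]
    have hsq : ((j.choose ((j + 1) / 2) : ℝ) / 2 ^ j) ^ 2
        = (j.choose ((j + 1) / 2) : ℝ) ^ 2 / 4 ^ j := by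
      rw [div_pow, ← pow_mul]
      norm_num
      rw [show (4:ℝ) = 2^2 by norm_num, ← pow_mul, mul_comm]
    rw [hsq]
    have hs2 : (j : ℝ) ≤ 2 * (((j + 1) / 2 : ℕ) : ℝ) := by
      have : j ≤ 2 * ((j + 1) / 2) := by omega
      exact_mod_cast this
    have hmc := mid_choose_sq j
    have hspos : (0 : ℝ) < (((j + 1) / 2 : ℕ) : ℝ) + 1 := by positivity
    rw [div_le_div_iff₀ (by positivity) (by positivity)]
    calc (j.choose ((j + 1) / 2) : ℝ) ^ 2 * ((j : ℝ) + 1)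
        ≤ (j.choose ((j + 1) / 2) : ℝ) ^ 2 * (2 * ((((j + 1) / 2 : ℕ) : ℝ) + 1)) := by
          refine mul_le_mul_of_nonneg_left ?_ (by positivity)
          linarith
      _ = 2 * ((j.choose ((j + 1) / 2) : ℝ) ^ 2 * ((((j + 1) / 2 : ℕ) : ℝ) + 1)) := by ring
      _ ≤ 2 * 4 ^ j := by linarith
  have htop : Tendsto (fun j : ℕ => 2 / ((j : ℝ) + 1)) atTop (nhds 0) := by
    have h := tendsto_const_div_atTop_nhds_zero_nat (2 : ℝ)
    have hcomp : Tendsto (fun j : ℕ => j + 1) atTop atTop := tendsto_add_atTop_nat 1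
    have := h.comp hcomp
    refine this.congr fun j => ?_
    simp only [Function.comp_apply]
    push_cast
    ring
  have hsqrt : Tendsto (fun j : ℕ => Real.sqrt (2 / ((j : ℝ) + 1))) atTop (nhds 0) := by
    have := (Real.continuous_sqrt.tendsto 0).comp htop
    simpa only [Function.comp_def, Real.sqrt_zero] using this
  exact tendsto_of_tendsto_of_tendsto_of_le_of_le tendsto_const_nhds hsqrt h0 hle

lemma key_sum (y : ℤ → ℝ) (j : ℕ) (a : ℤ) :
    ∑ k ∈ range (j + 3), (wcoef (j + 1) k : ℝ) * y (a - k)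
      = (∑ k ∈ range (j + 2), (wcoef j k : ℝ) * y (a - k))
        + ∑ k ∈ range (j + 2), (wcoef j k : ℝ) * y (a - 1 - k) := by
  rw [show j + 3 = (j + 2) + 1 from rfl, Finset.sum_range_succ' _ (j + 2)]
  have hps : ∀ i ∈ range (j + 2), (wcoef (j + 1) (i + 1) : ℝ) * y (a - (i + 1 : ℕ))
      = (wcoef j (i + 1) : ℝ) * y (a - 1 - i) + (wcoef j i : ℝ) * y (a - 1 - i) := by
    intro i _
    have harg : a - ((i + 1 : ℕ) : ℤ) = a - 1 - i := by push_cast; ring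
    rw [harg, wcoef_pascal]
    push_cast
    ring
  rw [Finset.sum_congr rfl hps, Finset.sum_add_distrib]
  have h1 : ∑ i ∈ range (j + 2), (wcoef j (i + 1) : ℝ) * y (a - 1 - i) + (wcoef (j + 1) 0 : ℝ) * y (a - (0 : ℕ))
      = ∑ k ∈ range (j + 2), (wcoef j k : ℝ) * y (a - k) := by
    have h2 : ∑ k ∈ range (j + 2 + 1), (wcoef j k : ℝ) * y (a - k)
        = (∑ i ∈ range (j + 2), (wcoef j (i + 1) : ℝ) * y (a - (i + 1 : ℕ)))
          + (wcoef j 0 : ℝ) * y (a - (0 : ℕ)) := Finset.sum_range_succ' _ (j + 2)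
    have h3 : ∑ k ∈ range (j + 2 + 1), (wcoef j k : ℝ) * y (a - k)
        = ∑ k ∈ range (j + 2), (wcoef j k : ℝ) * y (a - k) := by
      rw [Finset.sum_range_succ, wcoef_eq_zero (by omega)]
      simp
    rw [← h3, h2, wcoef_zero, wcoef_zero]
    congr 1
    refine Finset.sum_congr rfl fun i _ => ?_
    congr 1
    push_cast
    ring
  calc (∑ i ∈ range (j + 2), (wcoef j (i + 1) : ℝ) * y (a - 1 - i))
        + (∑ i ∈ range (j + 2), (wcoef j i : ℝ) * y (a - 1 - i))
        + (wcoef (j + 1) 0 : ℝ) * y (a - (0 : ℕ))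
      = (∑ i ∈ range (j + 2), (wcoef j (i + 1) : ℝ) * y (a - 1 - i)
          + (wcoef (j + 1) 0 : ℝ) * y (a - (0 : ℕ)))
        + ∑ i ∈ range (j + 2), (wcoef j i : ℝ) * y (a - 1 - i) := by ring
    _ = (∑ k ∈ range (j + 2), (wcoef j k : ℝ) * y (a - k))
        + ∑ i ∈ range (j + 2), (wcoef j i : ℝ) * y (a - 1 - i) := by rw [h1]

lemma gap_formula (y : ℤ → ℝ) : ∀ (j : ℕ) (n : ℤ),
    (2 : ℝ) ^ j * (midIter y j (n + 1) - midIter y j n)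
      = ∑ k ∈ range (j + 2), (wcoef j k : ℝ) * y (n + 1 + (((j + 1) / 2 : ℕ) : ℤ) - k) := by
  intro j
  induction j with
  | zero =>
      intro n
      simp [midIter, Finset.sum_range_succ, wcoef_zero, wcoef_succ]
      ring
  | succ j IH =>
      intro n
      have expand : (2 : ℝ) ^ (j + 1) * (midIter y (j + 1) (n + 1) - midIter y (j + 1) n)
          = 2 ^ j * (midIter y j (n + 1) - midIter y j n)
            + 2 ^ j * (midIter y j ((n + (-1) ^ j) + 1) - midIter y j (n + (-1) ^ j)) := by
        show (2 : ℝ) ^ (j + 1) * ((midIter y j (n + 1) + midIter y j (n + 1 + (-1) ^ j)) / 2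
            - (midIter y j n + midIter y j (n + (-1) ^ j)) / 2) = _
        rw [show n + 1 + (-1 : ℤ) ^ j = (n + (-1) ^ j) + 1 by ring]
        ring
      rw [expand, IH (n), IH (n + (-1) ^ j)]
      rcases Nat.even_or_odd j with ⟨m, hm⟩ | ⟨m, hm⟩
      · have hpow : (-1 : ℤ) ^ j = 1 := Even.neg_one_pow ⟨m, hm⟩
        have hs1 : (j + 1) / 2 = m := by omega
        have hs2 : (j + 1 + 1) / 2 = m + 1 := by omega
        rw [hpow, hs1, hs2]
        have hk := key_sum y j (n + 2 + m)
        have g1 : ∑ k ∈ range (j + 3), (wcoef (j + 1) k : ℝ) * y (n + 1 + ((m + 1 : ℕ) : ℤ) - k)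
            = ∑ k ∈ range (j + 3), (wcoef (j + 1) k : ℝ) * y ((n + 2 + m) - k) :=
          Finset.sum_congr rfl fun k _ => by
            rw [show n + 1 + ((m + 1 : ℕ) : ℤ) - k = (n + 2 + m) - (k : ℤ) by push_cast; ring]
        have g2 : ∑ k ∈ range (j + 2), (wcoef j k : ℝ) * y (n + 1 + ((m : ℕ) : ℤ) - k)
            = ∑ k ∈ range (j + 2), (wcoef j k : ℝ) * y ((n + 2 + m) - 1 - k) :=
          Finset.sum_congr rfl fun k _ => by
            rw [show n + 1 + ((m : ℕ) : ℤ) - k = (n + 2 + m) - 1 - (k : ℤ) by push_cast; ring]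
        have g3 : ∑ k ∈ range (j + 2), (wcoef j k : ℝ) * y (n + 1 + 1 + ((m : ℕ) : ℤ) - k)
            = ∑ k ∈ range (j + 2), (wcoef j k : ℝ) * y ((n + 2 + m) - k) :=
          Finset.sum_congr rfl fun k _ => by
            rw [show n + 1 + 1 + ((m : ℕ) : ℤ) - k = (n + 2 + m) - (k : ℤ) by push_cast; ring]
        rw [show j + 1 + 2 = j + 3 from rfl, g1, g2, g3, hk]
        ring
      · have hpow : (-1 : ℤ) ^ j = -1 := Odd.neg_one_pow ⟨m, hm⟩
        have hs1 : (j + 1) / 2 = m + 1 := by omega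
        have hs2 : (j + 1 + 1) / 2 = m + 1 := by omega
        rw [hpow, hs1, hs2]
        have hk := key_sum y j (n + 2 + m)
        have g1 : ∑ k ∈ range (j + 3), (wcoef (j + 1) k : ℝ) * y (n + 1 + ((m + 1 : ℕ) : ℤ) - k)
            = ∑ k ∈ range (j + 3), (wcoef (j + 1) k : ℝ) * y ((n + 2 + m) - k) :=
          Finset.sum_congr rfl fun k _ => by
            rw [show n + 1 + ((m + 1 : ℕ) : ℤ) - k = (n + 2 + m) - (k : ℤ) by push_cast; ring]
        have g2 : ∑ k ∈ range (j + 2), (wcoef j k : ℝ) * y (n + 1 + ((m + 1 : ℕ) : ℤ) - k)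
            = ∑ k ∈ range (j + 2), (wcoef j k : ℝ) * y ((n + 2 + m) - k) :=
          Finset.sum_congr rfl fun k _ => by
            rw [show n + 1 + ((m + 1 : ℕ) : ℤ) - k = (n + 2 + m) - (k : ℤ) by push_cast; ring]
        have g3 : ∑ k ∈ range (j + 2), (wcoef j k : ℝ) * y (n + -1 + 1 + ((m + 1 : ℕ) : ℤ) - k)
            = ∑ k ∈ range (j + 2), (wcoef j k : ℝ) * y ((n + 2 + m) - 1 - k) :=
          Finset.sum_congr rfl fun k _ => by
            rw [show n + -1 + 1 + ((m + 1 : ℕ) : ℤ) - k = (n + 2 + m) - 1 - (k : ℤ) by push_cast; ring]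
        rw [show j + 1 + 2 = j + 3 from rfl, g1, g2, g3, hk]

lemma gap_estimate (y : ℤ → ℝ) (n : ℤ) (δ C : ℝ) (hδ : 0 ≤ δ) (hC : 0 ≤ C)
    (hbound : ∀ m : ℤ, |y m| ≤ δ * |(m : ℝ)| + C) (j : ℕ) :
    ‖midIter y j (n + 1) - midIter y j n‖
      ≤ (δ * (|(n : ℝ)| + 1) + C) * (2 * ((j.choose ((j + 1) / 2) : ℝ) / 2 ^ j)) + δ := by
  set s := (j + 1) / 2 with hs
  have h2j : (0 : ℝ) < 2 ^ j := by positivity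
  have hgf := gap_formula y j n
  have hid1 : ∑ k ∈ range (j + 2), |(wcoef j k : ℝ)| = 2 * (j.choose s : ℝ) := by
    have := sum_abs_wcoef j
    have h : ((∑ k ∈ range (j + 2), |wcoef j k| : ℤ) : ℝ) = ((2 * (j.choose s : ℤ) : ℤ) : ℝ) := by
      rw [this]
    push_cast at h
    convert h using 2
  have hid2 : ∑ k ∈ range (j + 2), |(wcoef j k : ℝ)| * |((s : ℤ) : ℝ) - (k : ℝ)|
      = 2 ^ j := by
    have := sum_abs_wcoef_mul j
    have h : ((∑ k ∈ range (j + 2), |wcoef j k| * |((s : ℕ) : ℤ) - (k : ℤ)| : ℤ) : ℝ)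
        = (((2 : ℤ) ^ j : ℤ) : ℝ) := by rw [this]
    push_cast at h
    convert h using 2
    all_goals simp only [Int.cast_natCast]
  have habs : |∑ k ∈ range (j + 2), (wcoef j k : ℝ) * y (n + 1 + ((s : ℕ) : ℤ) - k)|
      ≤ (δ * (|(n : ℝ)| + 1) + C) * (2 * (j.choose s : ℝ)) + δ * 2 ^ j := by
    calc |∑ k ∈ range (j + 2), (wcoef j k : ℝ) * y (n + 1 + ((s : ℕ) : ℤ) - k)|
        ≤ ∑ k ∈ range (j + 2), |(wcoef j k : ℝ) * y (n + 1 + ((s : ℕ) : ℤ) - k)| :=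
          Finset.abs_sum_le_sum_abs _ _
      _ = ∑ k ∈ range (j + 2), |(wcoef j k : ℝ)| * |y (n + 1 + ((s : ℕ) : ℤ) - k)| :=
          Finset.sum_congr rfl fun k _ => abs_mul _ _
      _ ≤ ∑ k ∈ range (j + 2), |(wcoef j k : ℝ)|
            * ((δ * (|(n : ℝ)| + 1) + C) + δ * |((s : ℤ) : ℝ) - (k : ℝ)|) := by
          refine Finset.sum_le_sum fun k _ => ?_
          refine mul_le_mul_of_nonneg_left ?_ (abs_nonneg _)
          have h1 := hbound (n + 1 + ((s : ℕ) : ℤ) - k)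
          have h2 : |((n + 1 + ((s : ℕ) : ℤ) - k : ℤ) : ℝ)|
              ≤ |(n : ℝ)| + 1 + |((s : ℤ) : ℝ) - (k : ℝ)| := by
            push_cast
            rw [show (n : ℝ) + 1 + (s : ℝ) - k = (n : ℝ) + 1 + ((s : ℝ) - k) by ring]
            calc |(n : ℝ) + 1 + ((s : ℝ) - k)| ≤ |(n : ℝ) + 1| + |(s : ℝ) - k| := abs_add_le _ _
              _ ≤ |(n : ℝ)| + 1 + |(s : ℝ) - k| := by
                  have := abs_add_le (n : ℝ) 1
                  simp only [abs_one] at this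
                  linarith
          have h3 : δ * |((n + 1 + ((s : ℕ) : ℤ) - k : ℤ) : ℝ)|
              ≤ δ * (|(n : ℝ)| + 1 + |((s : ℤ) : ℝ) - (k : ℝ)|) :=
            mul_le_mul_of_nonneg_left h2 hδ
          have h4 : |((s : ℤ) : ℝ)| = ((s : ℕ) : ℝ) := by push_cast; exact abs_of_nonneg (by positivity)
          push_cast at h1 h3 ⊢
          linarith
      _ = (δ * (|(n : ℝ)| + 1) + C) * (∑ k ∈ range (j + 2), |(wcoef j k : ℝ)|)
            + δ * ∑ k ∈ range (j + 2), |(wcoef j k : ℝ)| * |((s : ℤ) : ℝ) - (k : ℝ)| := by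
          rw [Finset.mul_sum, Finset.mul_sum, ← Finset.sum_add_distrib]
          exact Finset.sum_congr rfl fun k _ => by ring
      _ = (δ * (|(n : ℝ)| + 1) + C) * (2 * (j.choose s : ℝ)) + δ * 2 ^ j := by
          rw [hid1, hid2]
  have heq : ‖midIter y j (n + 1) - midIter y j n‖
      = |∑ k ∈ range (j + 2), (wcoef j k : ℝ) * y (n + 1 + ((s : ℕ) : ℤ) - k)| / 2 ^ j := by
    rw [← hgf, abs_mul, abs_of_pos h2j]
    rw [Real.norm_eq_abs]
    field_simp
  rw [heq]
  rw [div_le_iff₀ h2j]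
  calc |∑ k ∈ range (j + 2), (wcoef j k : ℝ) * y (n + 1 + ((s : ℕ) : ℤ) - k)|
      ≤ (δ * (|(n : ℝ)| + 1) + C) * (2 * (j.choose s : ℝ)) + δ * 2 ^ j := habs
    _ = ((δ * (|(n : ℝ)| + 1) + C) * (2 * ((j.choose s : ℝ) / 2 ^ j)) + δ) * 2 ^ j := by
        field_simp

lemma gap_shift (x : ℤ → ℝ) : ∀ (j : ℕ) (n : ℤ),
    midIter x j (n + 1) - midIter x j n
      = 1 + (midIter (fun m : ℤ => x m - (m : ℝ)) j (n + 1)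
          - midIter (fun m : ℤ => x m - (m : ℝ)) j n) := by
  intro j
  induction j with
  | zero =>
      intro n
      show x (n + 1) - x n = 1 + ((x (n + 1) - ((n + 1 : ℤ) : ℝ)) - (x n - (n : ℝ)))
      push_cast
      ring
  | succ j IH =>
      intro n
      have h1 := IH n
      have h2 := IH (n + (-1) ^ j)
      show (midIter x j (n + 1) + midIter x j (n + 1 + (-1) ^ j)) / 2
          - (midIter x j n + midIter x j (n + (-1) ^ j)) / 2 = _
      rw [show n + 1 + (-1 : ℤ) ^ j = (n + (-1) ^ j) + 1 by ring]
      show _ = 1 + ((midIter _ j (n + 1) + midIter _ j (n + 1 + (-1) ^ j)) / 2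
          - (midIter _ j n + midIter _ j (n + (-1) ^ j)) / 2)
      rw [show n + 1 + (-1 : ℤ) ^ j = (n + (-1) ^ j) + 1 by ring]
      linarith

/-- If `x_n = n + o(n)` as `n → ±∞`, then for each fixed `n` the gaps of the
iterated midpoint sequences satisfy `x^j_{n+1} - x^j_n → 1` as `j → ∞`. -/
theorem stmt10 (x : ℤ → ℝ)
    (hx : (fun n : ℤ => x n - (n : ℝ)) =o[Filter.cofinite] (fun n : ℤ => (n : ℝ))) :
    ∀ n : ℤ, Tendsto (fun j : ℕ => midIter x j (n + 1) - midIter x j n)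
      atTop (nhds 1) := by
  intro n
  set y : ℤ → ℝ := fun m : ℤ => x m - (m : ℝ) with hy
  have hy0 : Tendsto (fun j : ℕ => midIter y j (n + 1) - midIter y j n) atTop (nhds 0) := by
    rw [NormedAddCommGroup.tendsto_nhds_zero]
    intro ε hε
    have hδpos : 0 < ε / 2 := by linarith
    have hfin : {m : ℤ | ¬ ‖y m‖ ≤ ε / 2 * ‖((m : ℤ) : ℝ)‖}.Finite := by
      have h := hx.def hδpos
      rwa [Filter.eventually_cofinite] at h
    set C := ∑ m ∈ hfin.toFinset, |y m| with hCdef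
    have hC0 : 0 ≤ C := Finset.sum_nonneg fun i _ => abs_nonneg _
    have hbound : ∀ m : ℤ, |y m| ≤ ε / 2 * |(m : ℝ)| + C := by
      intro m
      by_cases hm : ‖y m‖ ≤ ε / 2 * ‖((m : ℤ) : ℝ)‖
      · rw [Real.norm_eq_abs, Real.norm_eq_abs] at hm
        linarith
      · have hmem : m ∈ hfin.toFinset := by
          rw [Set.Finite.mem_toFinset]
          exact hm
        have h1 : |y m| ≤ C :=
          Finset.single_le_sum (fun i _ => abs_nonneg (y i)) hmem
        have h2 : 0 ≤ ε / 2 * |(m : ℝ)| := by positivity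
        linarith
    set K := ε / 2 * (|(n : ℝ)| + 1) + C with hKdef
    have hK0 : 0 ≤ K := by
      rw [hKdef]
      have h : 0 ≤ ε / 2 * (|(n : ℝ)| + 1) := by positivity
      linarith
    have hKp : (0 : ℝ) < 2 * (K + 1) := by linarith
    have hev : ∀ᶠ j : ℕ in atTop,
        (j.choose ((j + 1) / 2) : ℝ) / 2 ^ j < (ε / 2) / (2 * (K + 1)) :=
      mid_choose_tendsto.eventually_lt_const (by positivity)
    filter_upwards [hev] with j hj
    have hptw := gap_estimate y n (ε / 2) C (le_of_lt hδpos) hC0 hbound j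
    have hB0 : 0 ≤ (j.choose ((j + 1) / 2) : ℝ) / 2 ^ j := by positivity
    set B := (j.choose ((j + 1) / 2) : ℝ) / 2 ^ j with hBdef
    have hKB : K * (2 * B) < ε / 2 := by
      have h1 : K * (2 * B) ≤ (K + 1) * (2 * B) := by nlinarith
      have h2 : (K + 1) * (2 * B) < (K + 1) * (2 * ((ε / 2) / (2 * (K + 1)))) := by
        have := mul_lt_mul_of_pos_left hj hKp
        nlinarith
      have h3 : (K + 1) * (2 * ((ε / 2) / (2 * (K + 1)))) = ε / 2 := by
        field_simp
      linarith
    calc ‖midIter y j (n + 1) - midIter y j n‖ ≤ K * (2 * B) + ε / 2 := hptw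
      _ < ε / 2 + ε / 2 := by linarith
      _ = ε := by ring
  have hone : Tendsto (fun j : ℕ =>
      1 + (midIter y j (n + 1) - midIter y j n)) atTop (nhds (1 + 0)) :=
    tendsto_const_nhds.add hy0
  rw [add_zero] at hone
  exact hone.congr fun j => (gap_shift x j n).symm
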